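/- For every n ≥ 1, the identity ∏_{1 ≤ l < m ≤ n+1} (1 − t^{m−l+1}) · (1 − t)^n = ∏_{1 ≤ l < m ≤ n+1} (1 − t^{m−l}) · ∏_{i=2}^{n+1} (1 − t^i) holds in ℤ[t]. Equivalently, ∏_{α ∈ R₊}(1 − t^{1+ht(α)})/(1 − t^{ht(α)}) = ∏_{i=1}^{n}(1 − t^{i+1})/(1 − t) for the root system A_n, where ht(ε_l − ε_m) = m − l. -/

import Mathlib

open Finset

private lemma reindex {R : Type*} [CommRing R] (f : ℕ → R) {l N : ℕ} (hl : l ≤ N) :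
    ∏ m ∈ Finset.Ioc l N, f (m - l) = ∏ h ∈ Finset.Icc 1 (N - l), f h := by
  refine Finset.prod_nbij' (fun m => m - l) (fun h => h + l) ?_ ?_ ?_ ?_ ?_
  · intro m hm
    simp only [Finset.mem_Ioc] at hm
    simp only [Finset.mem_Icc]
    omega
  · intro h hh
    simp only [Finset.mem_Icc] at hh
    simp only [Finset.mem_Ioc]
    omega
  · intro m hm; simp only [Finset.mem_Ioc] at hm; omega
  · intro h hh; simp only [Finset.mem_Icc] at hh; omega
  · intro m hm; rfl

private lemma tele {R : Type*} [CommRing R] (t : R) (k : ℕ) :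
    (∏ h ∈ Finset.Icc 1 k, (1 - t ^ (h + 1))) * (1 - t) =
      (∏ h ∈ Finset.Icc 1 k, (1 - t ^ h)) * (1 - t ^ (k + 1)) := by
  induction k with
  | zero => simp
  | succ k ih =>
    rw [Finset.prod_Icc_succ_top (by omega), Finset.prod_Icc_succ_top (by omega : 1 ≤ k + 1)]
    have : (∏ h ∈ Finset.Icc 1 k, (1 - t ^ (h + 1))) * (1 - t ^ (k + 1 + 1)) * (1 - t)
        = ((∏ h ∈ Finset.Icc 1 k, (1 - t ^ (h + 1))) * (1 - t)) * (1 - t ^ (k + 1 + 1)) := by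
      ring
    rw [this, ih]

/-- Poincaré polynomial identity for `A_n`:
`∏_{1≤l<m≤n+1} (1 − t^{m−l+1}) · (1−t)^n = ∏_{1≤l<m≤n+1} (1 − t^{m−l}) · ∏_{i=2}^{n+1} (1 − t^i)`. -/
theorem stmt14 {R : Type*} [CommRing R] (t : R) (n : ℕ) (hn : 1 ≤ n) :
    (∏ l ∈ Finset.Icc 1 (n + 1), ∏ m ∈ Finset.Ioc l (n + 1), (1 - t ^ (m - l + 1))) *
        (1 - t) ^ n =
      (∏ l ∈ Finset.Icc 1 (n + 1), ∏ m ∈ Finset.Ioc l (n + 1), (1 - t ^ (m - l))) *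
        ∏ i ∈ Finset.Icc 2 (n + 1), (1 - t ^ i) := by
  have hA : ∀ l ∈ Finset.Icc 1 (n + 1),
      ∏ m ∈ Finset.Ioc l (n + 1), (1 - t ^ (m - l + 1))
        = ∏ h ∈ Finset.Icc 1 (n + 1 - l), (1 - t ^ (h + 1)) := by
    intro l hl
    simp only [Finset.mem_Icc] at hl
    exact reindex (fun h => 1 - t ^ (h + 1)) hl.2
  have hB : ∀ l ∈ Finset.Icc 1 (n + 1),
      ∏ m ∈ Finset.Ioc l (n + 1), (1 - t ^ (m - l))
        = ∏ h ∈ Finset.Icc 1 (n + 1 - l), (1 - t ^ h) := by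
    intro l hl
    simp only [Finset.mem_Icc] at hl
    exact reindex (fun h => 1 - t ^ h) hl.2
  rw [Finset.prod_congr rfl hA, Finset.prod_congr rfl hB]
  -- drop the top (empty) row l = n+1
  rw [Finset.prod_Icc_succ_top (by omega : 1 ≤ n + 1),
    Finset.prod_Icc_succ_top (by omega : 1 ≤ n + 1)]
  simp only [Nat.sub_self, Finset.Icc_eq_empty_of_lt (by omega : (1:ℕ) > 0),
    Finset.prod_empty, mul_one]
  -- fold (1-t)^n into the product over l ∈ Icc 1 n
  have hpow : (1 - t) ^ n = ∏ _l ∈ Finset.Icc 1 n, (1 - t) := by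
    rw [Finset.prod_const]; simp
  rw [hpow, ← Finset.prod_mul_distrib]
  have hstep : ∀ l ∈ Finset.Icc 1 n,
      (∏ h ∈ Finset.Icc 1 (n + 1 - l), (1 - t ^ (h + 1))) * (1 - t)
        = (∏ h ∈ Finset.Icc 1 (n + 1 - l), (1 - t ^ h)) * (1 - t ^ (n + 2 - l)) := by
    intro l hl
    simp only [Finset.mem_Icc] at hl
    have : n + 1 - l + 1 = n + 2 - l := by omega
    rw [tele, this]
  rw [Finset.prod_congr rfl hstep, Finset.prod_mul_distrib]
  congr 1
  refine Finset.prod_nbij' (fun l => n + 2 - l) (fun i => n + 2 - i) ?_ ?_ ?_ ?_ ?_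
  · intro l hl; simp only [Finset.mem_Icc] at *; omega
  · intro i hi; simp only [Finset.mem_Icc] at *; omega
  · intro l hl; simp only [Finset.mem_Icc] at hl; omega
  · intro i hi; simp only [Finset.mem_Icc] at hi; omega
  · intro l hl; rfl
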